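/- Let R = ℂ[ħ] be the polynomial ring in a variable ħ and consider R-linear endomorphisms of the polynomial ring R[x₁, x₂, x₃], where ∂_i denotes the formal partial derivative with respect to x_i and x_i and scalars act by multiplication. Define L₁ := ħ∂₁ − ħ(3x₁∂₁ + 5x₂∂₂ + x₃∂₃) − (9/2)ħ, L₂ := ħ∂₂ − ħ((8/3)x₃∂₁ + 3x₁∂₂) − (3ħ²/80)∂₃², L₃ := ħ∂₃ − ħ((5/3)x₂∂₁ + 3x₁∂₃) + 60x₃². Then [L₁, L₂] = 2ħL₂, [L₁, L₃] = −2ħL₃, and [L₂, L₃] = ħL₁; that is, (L₁, L₂, L₃) is a quantum Airy structure whose underlying Lie algebra is the simple Lie algebra sl₂(ℂ). -/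

import Mathlib

noncomputable section

/-- Multiplication by the variable `x_i`, as a `ℂ[ħ]`-linear endomorphism of
`ℂ[ħ][x₁, x₂, x₃]`. -/
def xOp3 (i : Fin 3) : Module.End (Polynomial ℂ) (MvPolynomial (Fin 3) (Polynomial ℂ)) :=
  LinearMap.mulLeft (Polynomial ℂ) (MvPolynomial.X i)

/-- The formal partial derivative `∂_i` on `ℂ[ħ][x₁, x₂, x₃]`. -/
def dOp3 (i : Fin 3) : Module.End (Polynomial ℂ) (MvPolynomial (Fin 3) (Polynomial ℂ)) :=
  (MvPolynomial.pderiv i).toLinearMap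

/-- `L₁ = ħ∂₁ − ħ(3x₁∂₁ + 5x₂∂₂ + x₃∂₃) − (9/2)ħ`  (here `ħ = Polynomial.X`). -/
def Lsl1 : Module.End (Polynomial ℂ) (MvPolynomial (Fin 3) (Polynomial ℂ)) :=
  (Polynomial.X : Polynomial ℂ) • dOp3 0
    - (Polynomial.X : Polynomial ℂ) •
        ((3 : Polynomial ℂ) • (xOp3 0 * dOp3 0) + (5 : Polynomial ℂ) • (xOp3 1 * dOp3 1)
          + xOp3 2 * dOp3 2)
    - (Polynomial.X * Polynomial.C ((9 : ℂ) / 2)) •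
        (1 : Module.End (Polynomial ℂ) (MvPolynomial (Fin 3) (Polynomial ℂ)))

/-- `L₂ = ħ∂₂ − ħ((8/3)x₃∂₁ + 3x₁∂₂) − (3ħ²/80)∂₃²`. -/
def Lsl2 : Module.End (Polynomial ℂ) (MvPolynomial (Fin 3) (Polynomial ℂ)) :=
  (Polynomial.X : Polynomial ℂ) • dOp3 1
    - (Polynomial.X : Polynomial ℂ) •
        (Polynomial.C ((8 : ℂ) / 3) • (xOp3 2 * dOp3 0) + (3 : Polynomial ℂ) • (xOp3 0 * dOp3 1))
    - (Polynomial.X ^ 2 * Polynomial.C ((3 : ℂ) / 80)) • (dOp3 2 * dOp3 2)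

/-- `L₃ = ħ∂₃ − ħ((5/3)x₂∂₁ + 3x₁∂₃) + 60x₃²`. -/
def Lsl3 : Module.End (Polynomial ℂ) (MvPolynomial (Fin 3) (Polynomial ℂ)) :=
  (Polynomial.X : Polynomial ℂ) • dOp3 2
    - (Polynomial.X : Polynomial ℂ) •
        (Polynomial.C ((5 : ℂ) / 3) • (xOp3 1 * dOp3 0) + (3 : Polynomial ℂ) • (xOp3 0 * dOp3 2))
    + (60 : Polynomial ℂ) • (xOp3 2 * xOp3 2)

end


lemma pderiv_comm' {σ R : Type*} [DecidableEq σ] [CommSemiring R] (i j : σ)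
    (p : MvPolynomial σ R) :
    MvPolynomial.pderiv i (MvPolynomial.pderiv j p) =
      MvPolynomial.pderiv j (MvPolynomial.pderiv i p) := by
  induction p using MvPolynomial.induction_on with
  | C a => simp
  | add p q hp hq => simp [hp, hq]
  | mul_X p k hp =>
    simp [MvPolynomial.pderiv_mul, hp, Pi.single_apply, apply_ite (MvPolynomial.pderiv i),
      apply_ite (MvPolynomial.pderiv j)]
    abel

lemma CC_eq (a : ℂ) :
    (MvPolynomial.C (Polynomial.C a) : MvPolynomial (Fin 3) (Polynomial ℂ)) = a • 1 := by
  rw [← Polynomial.algebraMap_eq, ← MvPolynomial.algebraMap_eq, ← IsScalarTower.algebraMap_apply,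
    Algebra.algebraMap_eq_smul_one]

set_option maxHeartbeats 4000000 in
/-- The operators `(L₁, L₂, L₃)` form a quantum Airy structure based on `sl₂(ℂ)`:
`[L₁,L₂] = 2ħL₂`, `[L₁,L₃] = −2ħL₃` and `[L₂,L₃] = ħL₁`. -/
theorem stmt9 :
    (Lsl1 * Lsl2 - Lsl2 * Lsl1 = ((2 : Polynomial ℂ) * Polynomial.X) • Lsl2)
    ∧ (Lsl1 * Lsl3 - Lsl3 * Lsl1 = (-((2 : Polynomial ℂ) * Polynomial.X)) • Lsl3)
    ∧ (Lsl2 * Lsl3 - Lsl3 * Lsl2 = (Polynomial.X : Polynomial ℂ) • Lsl1) := by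
  refine ⟨?_, ?_, ?_⟩ <;>
  · refine LinearMap.ext fun p => ?_
    simp only [Lsl1, Lsl2, Lsl3, dOp3, xOp3, LinearMap.mulLeft_apply, Module.End.mul_apply,
      LinearMap.sub_apply, LinearMap.add_apply, LinearMap.smul_apply, Module.End.one_apply,
      LinearMap.neg_apply, Derivation.coeFn_coe,
      map_add, map_sub, map_smul, map_zero, Derivation.map_one_eq_zero, MvPolynomial.pderiv_mul, MvPolynomial.pderiv_X,
      Pi.single_apply, Fin.isValue, show (0:Fin 3) ≠ 1 by decide, show (0:Fin 3) ≠ 2 by decide,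
      show (1:Fin 3) ≠ 0 by decide, show (1:Fin 3) ≠ 2 by decide,
      show (2:Fin 3) ≠ 0 by decide, show (2:Fin 3) ≠ 1 by decide,
      if_true, if_false,
      smul_add, smul_sub, smul_smul, neg_smul]
    simp only [pderiv_comm' (1 : Fin 3) 0, pderiv_comm' (2 : Fin 3) 0, pderiv_comm' (2 : Fin 3) 1,
      MvPolynomial.smul_eq_C_mul, map_mul, map_pow, map_neg, neg_mul, mul_neg, neg_neg, smul_neg, neg_smul,
      show (2 : Polynomial ℂ) = Polynomial.C 2 from (map_ofNat Polynomial.C 2).symm,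
      show (3 : Polynomial ℂ) = Polynomial.C 3 from (map_ofNat Polynomial.C 3).symm,
      show (5 : Polynomial ℂ) = Polynomial.C 5 from (map_ofNat Polynomial.C 5).symm,
      show (60 : Polynomial ℂ) = Polynomial.C 60 from (map_ofNat Polynomial.C 60).symm,
      CC_eq, map_zero, smul_mul_assoc, mul_smul_comm, mul_one, smul_smul,
      show ∀ (a : Polynomial ℂ) (c : ℂ) (v : MvPolynomial (Fin 3) (Polynomial ℂ)),
        a • c • v = c • a • v from fun a c v => smul_comm a c v,
      zero_mul, mul_zero, smul_zero, add_zero, zero_add, sub_zero, zero_sub]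
    simp only [pow_succ, pow_zero, one_mul, mul_add, add_mul, smul_add, smul_sub, mul_sub, sub_mul,
      smul_mul_assoc, mul_smul_comm, mul_one, smul_smul,
      mul_comm, mul_left_comm, mul_assoc]
    module
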